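/- Let R be a finite commutative chain ring with maximal ideal ⟨γ⟩, nilpotency index t, and residue field of cardinality q, and let n be a positive integer with gcd(n, q) = 1. Then for every λ ∈ 1 + γR there is a ring isomorphism R[X]/⟨X^n − 1⟩ ≅ R[X]/⟨X^n − λ⟩, and for every β ∈ −1 + γR there is a ring isomorphism R[X]/⟨X^n + 1⟩ ≅ R[X]/⟨X^n − β⟩. -/

import Mathlib

open Polynomial

section Defs

variable {R : Type*}

/-- An idempotent `e` of a commutative ring is *primitive* if it is nonzero and cannot be
written as a sum of two nonzero orthogonal idempotents. -/
def IsPrimitiveIdem [CommRing R] (e : R) : Prop :=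
  IsIdempotentElem e ∧ e ≠ 0 ∧
    ∀ u v : R, IsIdempotentElem u → IsIdempotentElem v → u * v = 0 → e = u + v →
      u = 0 ∨ v = 0

/-- A family of idempotents forming a complete set of pairwise orthogonal idempotents. -/
def IsCompleteOrthoIdem [CommRing R] {r : ℕ} (e : Fin r → R) : Prop :=
  (∀ i, IsIdempotentElem (e i)) ∧ (∑ i, e i) = 1 ∧
    ∀ i j, i ≠ j → e i * e j = 0

/-- A complete set of pairwise orthogonal primitive idempotents. -/
def IsCompletePrimIdem [CommRing R] {r : ℕ} (e : Fin r → R) : Prop :=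
  IsCompleteOrthoIdem e ∧ ∀ i, IsPrimitiveIdem (e i)

/-- The `lam`-constacyclic shift `(a_0, …, a_(n-1)) ↦ (lam·a_(n-1), a_0, …, a_(n-2))`. -/
def ctShift [CommRing R] {n : ℕ} [NeZero n] (lam : R) (a : Fin n → R) : Fin n → R :=
  fun i => if i = 0 then lam * a (i - 1) else a (i - 1)

/-- The dual code of a linear code of length `n` over `R`. -/
def dualCode [CommRing R] {n : ℕ} (Ccode : Submodule R (Fin n → R)) :
    Submodule R (Fin n → R) where
  carrier := {a | ∀ b ∈ Ccode, ∑ i, a i * b i = 0}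
  add_mem' := by
    intro a a' ha ha' b hb
    simpa [add_mul, Finset.sum_add_distrib] using by rw [ha b hb, ha' b hb, add_zero]
  zero_mem' := by intro b hb; simp
  smul_mem' := by
    intro c a ha b hb
    simpa [Finset.mul_sum, mul_assoc] using by rw [← Finset.mul_sum, ha b hb, mul_zero]

/-- The linear map `(a_0, …, a_(n-1)) ↦ a_0 + a_1 x + ⋯ + a_(n-1) x^(n-1)` from `R^n` to
`R[X]/⟨g⟩`. -/
noncomputable def polyLin [CommRing R] (n : ℕ) (g : R[X]) :
    (Fin n → R) →ₗ[R] (R[X] ⧸ Ideal.span {g}) where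
  toFun a := Ideal.Quotient.mk _ (∑ i, C (a i) * X ^ (i : ℕ))
  map_add' a b := by
    simp only [Pi.add_apply, map_add, add_mul, Finset.sum_add_distrib]
  map_smul' c a := by
    simp only [Pi.smul_apply, smul_eq_mul, RingHom.id_apply]
    have h : (∑ i : Fin n, C (c * a i) * X ^ (i : ℕ))
        = c • ∑ i : Fin n, C (a i) * X ^ (i : ℕ) := by
      rw [Finset.smul_sum]
      exact Finset.sum_congr rfl fun i _ => by
        rw [Polynomial.smul_eq_C_mul, ← mul_assoc, ← C_mul]
    rw [h]
    exact (Submodule.Quotient.mk_smul (Ideal.span {g}) c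
      (∑ i : Fin n, C (a i) * X ^ (i : ℕ))).symm

/-- The linear code of length `n` corresponding to an ideal of `R[X]/⟨g⟩` under the usual
identification. -/
noncomputable def idealCode [CommRing R] (n : ℕ) (g : R[X])
    (I : Ideal (R[X] ⧸ Ideal.span {g})) : Submodule R (Fin n → R) :=
  (Submodule.restrictScalars R (I : Submodule (R[X] ⧸ Ideal.span {g}) (R[X] ⧸ Ideal.span {g}))).comap
    (polyLin n g)

/-- The reciprocal `f* = a_0 x^(n-1) + a_1 x^(n-2) + ⋯ + a_(n-1)` of an element
`f = a_0 + a_1 x + ⋯ + a_(n-1) x^(n-1)` of `R[X]/⟨g⟩`, viewed in `R[X]/⟨h⟩`; the canonical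
representative of degree `< n` is obtained by reduction `%ₘ g` of any representative. -/
noncomputable def recip [CommRing R] (n : ℕ) (g h : R[X]) (f : R[X] ⧸ Ideal.span {g}) :
    R[X] ⧸ Ideal.span {h} :=
  Ideal.Quotient.mk _ (((Ideal.Quotient.mk_surjective f).choose %ₘ g).reflect (n - 1))

/-- The code `c·R^n = {(c·b_0, …, c·b_(n-1)) : b ∈ R^n}`. -/
def scalarCode [CommRing R] (n : ℕ) (c : R) : Submodule R (Fin n → R) where
  carrier := {a | ∀ i, ∃ b, a i = c * b}
  add_mem' := by
    intro a a' ha ha' i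
    obtain ⟨b, hb⟩ := ha i; obtain ⟨b', hb'⟩ := ha' i
    exact ⟨b + b', by simp [hb, hb', mul_add]⟩
  zero_mem' := fun i => ⟨0, by simp⟩
  smul_mem' := by
    intro r a ha i
    obtain ⟨b, hb⟩ := ha i
    exact ⟨r * b, by simp [hb]; ring⟩

end Defs



section Aux
variable {R : Type*} [CommRing R]

noncomputable def substHom (n : ℕ) (c d α : R) (h : α ^ n * d = c) :
    (R[X] ⧸ Ideal.span {X ^ n - C c}) →+* (R[X] ⧸ Ideal.span {X ^ n - C d}) := by
  refine Ideal.Quotient.lift _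
    (eval₂RingHom ((Ideal.Quotient.mk (Ideal.span {X ^ n - C d})).comp C)
      (Ideal.Quotient.mk _ (C α * X))) ?_
  intro a ha
  obtain ⟨b, rfl⟩ := Ideal.mem_span_singleton'.mp ha
  rw [map_mul]
  have : (eval₂RingHom ((Ideal.Quotient.mk (Ideal.span {X ^ n - C d})).comp C)
      (Ideal.Quotient.mk _ (C α * X))) (X ^ n - C c) = 0 := by
    simp only [coe_eval₂RingHom, eval₂_sub, eval₂_pow, eval₂_X, eval₂_C, RingHom.comp_apply]
    rw [← map_pow, ← map_sub, Ideal.Quotient.eq_zero_iff_mem]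
    have : (C α * X) ^ n - C c = C (α ^ n) * (X ^ n - C d) := by
      rw [← h, C_mul, C_pow, mul_pow]; ring
    rw [this]
    exact Ideal.mul_mem_left _ _ (Ideal.subset_span rfl)
  rw [this, mul_zero]

lemma substHom_mk_C (n : ℕ) (c d α : R) (h : α ^ n * d = c) (r : R) :
    substHom n c d α h (Ideal.Quotient.mk _ (C r)) = Ideal.Quotient.mk _ (C r) := by
  simp [substHom]

lemma substHom_mk_CX (n : ℕ) (c d α β : R) (h : α ^ n * d = c) (b : R) :
    substHom n c d α h (Ideal.Quotient.mk _ (C b * X)) =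
      Ideal.Quotient.mk _ (C (b * α) * X) := by
  simp [substHom, C_mul, mul_assoc]

lemma quot_equiv (n : ℕ) (c d α αi : R) (hα : α * αi = 1) (h : α ^ n * d = c) :
    Nonempty ((R[X] ⧸ Ideal.span {X ^ n - C c}) ≃+* (R[X] ⧸ Ideal.span {X ^ n - C d})) := by
  have h' : αi ^ n * c = d := by
    rw [← h, ← mul_assoc, ← mul_pow, mul_comm αi α, hα, one_pow, one_mul]
  refine ⟨RingEquiv.ofRingHom (substHom n c d α h) (substHom n d c αi h') ?_ ?_⟩
  · apply Ideal.Quotient.ringHom_ext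
    apply Polynomial.ringHom_ext
    · intro a
      simp only [RingHom.comp_apply, RingHom.id_apply]
      rw [substHom_mk_C, substHom_mk_C]
    · simp only [RingHom.comp_apply, RingHom.id_apply]
      have hX : (Ideal.Quotient.mk (Ideal.span {X ^ n - C d})) X
          = Ideal.Quotient.mk _ (C 1 * X) := by rw [map_one C, one_mul]
      rw [hX, substHom_mk_CX (β := α), substHom_mk_CX (β := αi), one_mul, mul_comm αi α, hα,
        map_one C, one_mul]
  · apply Ideal.Quotient.ringHom_ext
    apply Polynomial.ringHom_ext
    · intro a
      simp only [RingHom.comp_apply, RingHom.id_apply]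
      rw [substHom_mk_C, substHom_mk_C]
    · simp only [RingHom.comp_apply, RingHom.id_apply]
      have hX : (Ideal.Quotient.mk (Ideal.span {X ^ n - C c})) X
          = Ideal.Quotient.mk _ (C 1 * X) := by rw [map_one C, one_mul]
      rw [hX, substHom_mk_CX (β := αi), substHom_mk_CX (β := α), one_mul, hα, map_one C, one_mul]

end Aux


section Aux2
variable {R : Type*} [CommRing R]

lemma one_add_pow_eq (z : R) (q : ℕ) : ∃ s : R, (1 + z) ^ q = 1 + q * z + z ^ 2 * s := by
  induction q with
  | zero => exact ⟨0, by simp⟩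
  | succ m ih =>
    obtain ⟨s, hs⟩ := ih
    refine ⟨s + m + z * s, ?_⟩
    rw [pow_succ, hs]
    push_cast
    ring

lemma unit_pow_q (γ : R) (q : ℕ) (c : R) (hq : (q : R) = γ * c)
    (t : ℕ) (hnil : γ ^ t = 0) (ht : 1 ≤ t) (u : R) (hu : ∃ b, u = 1 + γ * b) :
    u ^ q ^ (t - 1) = 1 := by
  have key : ∀ j : ℕ, ∃ y : R, u ^ q ^ j = 1 + γ ^ (j + 1) * y := by
    intro j
    induction j with
    | zero => obtain ⟨b, rfl⟩ := hu; exact ⟨b, by simp⟩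
    | succ m ih =>
      obtain ⟨y, hy⟩ := ih
      obtain ⟨s, hs⟩ := one_add_pow_eq (γ ^ (m + 1) * y) q
      refine ⟨c * y + γ ^ m * y ^ 2 * s, ?_⟩
      rw [pow_succ, pow_mul, hy, hs, hq]
      ring
  obtain ⟨y, hy⟩ := key (t - 1)
  rw [hy, Nat.sub_add_cancel ht, hnil, zero_mul, add_zero]

lemma root_exists (n e : ℕ) (hn : 0 < n) (he : 0 < e) (hcop : Nat.Coprime n e)
    (u : R) (hue : u ^ e = 1) :
    ∃ α αi : R, α * αi = 1 ∧ α ^ n * u = 1 := by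
  obtain ⟨k, l, hkl⟩ : ∃ k l : ℕ, n * k + 1 = e * l := by
    rcases eq_or_lt_of_le (show 1 ≤ e from he) with he1 | he1
    · exact ⟨0, 1, by rw [← he1]; simp⟩
    · obtain ⟨m, -, hm⟩ := Nat.exists_mul_mod_eq_one_of_coprime hcop he1
      refine ⟨m * (e - 1), ?_⟩
      have h1 : n * m ≡ 1 [MOD e] := by
        unfold Nat.ModEq
        rw [hm, Nat.mod_eq_of_lt he1]
      have h2 : n * (m * (e - 1)) + 1 ≡ 0 [MOD e] := by
        calc n * (m * (e - 1)) + 1 = n * m * (e - 1) + 1 := by ring_nf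
        _ ≡ 1 * (e - 1) + 1 [MOD e] := Nat.ModEq.add_right 1 (h1.mul_right _)
        _ = e := by rw [one_mul, Nat.sub_add_cancel he]
        _ ≡ 0 [MOD e] := (Nat.modEq_zero_iff_dvd).mpr dvd_rfl
      obtain ⟨l, hl⟩ := (Nat.modEq_zero_iff_dvd).mp h2
      exact ⟨l, hl⟩
  have hpow : u ^ (n * k) * u = 1 := by
    rw [← pow_succ, hkl, pow_mul, hue, one_pow]
  refine ⟨u ^ k, (u ^ k) ^ (n - 1) * u, ?_, ?_⟩
  · calc u ^ k * ((u ^ k) ^ (n - 1) * u)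
        = (u ^ k) ^ (n - 1 + 1) * u := by ring
    _ = (u ^ k) ^ n * u := by rw [Nat.sub_add_cancel hn]
    _ = u ^ (n * k) * u := by rw [← pow_mul, mul_comm k n]
    _ = 1 := hpow
  · rw [← pow_mul, mul_comm k n, hpow]

end Aux2

/-- For `λ ∈ 1 + γR` there is a ring isomorphism `R[X]/⟨Xⁿ-1⟩ ≅ R[X]/⟨Xⁿ-λ⟩`, and for
`β ∈ -1 + γR` there is a ring isomorphism `R[X]/⟨Xⁿ+1⟩ ≅ R[X]/⟨Xⁿ-β⟩`. -/
theorem quotient_ring_isomorphisms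
    {R : Type*} [CommRing R] [Finite R] [IsLocalRing R]
    (γ : R) (t : ℕ)
    (hmax : IsLocalRing.maximalIdeal R = Ideal.span {γ})
    (hnil : γ ^ t = 0) (hnil' : γ ^ (t - 1) ≠ 0)
    (q : ℕ) (hq : q = Nat.card (IsLocalRing.ResidueField R))
    (n : ℕ) (hn : 0 < n) (hgcd : Nat.gcd n q = 1) :
    (∀ lam : R, (∃ b : R, lam = 1 + γ * b) →
      Nonempty ((Polynomial R ⧸ Ideal.span {(X ^ n - 1 : Polynomial R)}) ≃+*
        (Polynomial R ⧸ Ideal.span {X ^ n - C lam}))) ∧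
    (∀ beta : R, (∃ b : R, beta = -1 + γ * b) →
      Nonempty ((Polynomial R ⧸ Ideal.span {(X ^ n + 1 : Polynomial R)}) ≃+*
        (Polynomial R ⧸ Ideal.span {X ^ n - C beta}))) := by
  have ht : 1 ≤ t := by
    by_contra h
    have ht0 : t = 0 := by omega
    subst ht0
    exact hnil' (by simpa using hnil)
  haveI : Finite (IsLocalRing.ResidueField R) :=
    Finite.of_surjective _ (IsLocalRing.residue_surjective (R := R))
  letI : Fintype (IsLocalRing.ResidueField R) := Fintype.ofFinite _
  have hq0 : 0 < q := by
    rw [hq]; exact Nat.card_pos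
  have hqmem : (q : R) ∈ Ideal.span {γ} := by
    rw [← hmax]
    have h1 : (IsLocalRing.residue R) ((q : R)) = 0 := by
      rw [map_natCast]
      rw [hq, Nat.card_eq_fintype_card]
      exact Nat.cast_card_eq_zero _
    exact (Ideal.Quotient.eq_zero_iff_mem).mp h1
  obtain ⟨c, hc⟩ := Ideal.mem_span_singleton'.mp hqmem
  have hc' : (q : R) = γ * c := by rw [← hc, mul_comm]
  have he : 0 < q ^ (t - 1) := pow_pos hq0 _
  have hcop : Nat.Coprime n (q ^ (t - 1)) := (Nat.Coprime.pow_right _ hgcd)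
  constructor
  · intro lam hlam
    have hue : lam ^ q ^ (t - 1) = 1 := unit_pow_q γ q c hc' t hnil ht lam hlam
    obtain ⟨α, αi, hαi, hαn⟩ := root_exists n (q ^ (t - 1)) hn he hcop lam hue
    have := quot_equiv n 1 lam α αi hαi hαn
    rwa [map_one] at this
  · intro beta hbeta
    obtain ⟨b, hb⟩ := hbeta
    have hu : ∃ b' : R, -beta = 1 + γ * b' := ⟨-b, by rw [hb]; ring⟩
    have hue : (-beta) ^ q ^ (t - 1) = 1 := unit_pow_q γ q c hc' t hnil ht _ hu
    obtain ⟨α, αi, hαi, hαn⟩ := root_exists n (q ^ (t - 1)) hn he hcop (-beta) hue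
    have hαn' : α ^ n * beta = -1 := by
      have := hαn
      rw [mul_neg] at this
      linear_combination -this
    have h2 := quot_equiv n (-1) beta α αi hαi hαn'
    rwa [show (X ^ n - C (-1) : R[X]) = X ^ n + 1 by
      rw [map_neg, map_one, sub_neg_eq_add]] at h2
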